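/- Let d and p be positive integers, let L ≥ μ > 0, C ≥ 0, σ ≥ 0, B > 0 and η ≥ 0 be real numbers, and let F : ℝ^d → ℝ be differentiable with L-Lipschitz gradient and satisfying the μ-Polyak-Łojasiewicz condition with respect to a value F*. Let x_1, …, x_p ∈ ℝ^d and x̄ = (1/p)∑_{j=1}^p x_j. Let Y_1, …, Y_p be mutually independent, square-integrable random vectors in ℝ^d on a probability space with 𝔼[Y_j] = ∇F(x_j) and 𝔼[‖Y_j − ∇F(x_j)‖²] ≤ C‖∇F(x_j)‖² + σ²/B for each j. Then 𝔼[F(x̄ − η·(1/p)∑_{j=1}^p Y_j)] − F* ≤ (1 − μη)(F(x̄) − F*) + Lη²σ²/(2pB) + (η/(2p))·(Lη(C/p + 1) − 1)·∑_{j=1}^p ‖∇F(x_j)‖² + (ηL²/(2p))·∑_{j=1}^p ‖x̄ − x_j‖². -/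

import Mathlib

open MeasureTheory ProbabilityTheory
open scoped BigOperators

lemma lupa_descent {d : ℕ} {L : ℝ} (hL : 0 ≤ L)
    (F : EuclideanSpace ℝ (Fin d) → ℝ)
    (hdiff : Differentiable ℝ F)
    (hlip : ∀ x y : EuclideanSpace ℝ (Fin d),
      ‖gradient F x - gradient F y‖ ≤ L * ‖x - y‖)
    (x y : EuclideanSpace ℝ (Fin d)) :
    F y ≤ F x + inner ℝ (gradient F x) (y - x) + L / 2 * ‖y - x‖ ^ 2 := by
  set v := y - x with hv
  set ψ : ℝ → ℝ := fun t =>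
    F (x + t • v) - t * inner ℝ (gradient F x) v - L / 2 * ‖v‖ ^ 2 * t ^ 2 with hψ
  have hcurve : ∀ t : ℝ, HasDerivAt (fun s : ℝ => x + s • v) v t := by
    intro t
    simpa using ((hasDerivAt_id t).smul_const v).const_add x
  have hFt : ∀ t : ℝ, HasDerivAt (fun s : ℝ => F (x + s • v))
      (inner ℝ (gradient F (x + t • v)) v) t := by
    intro t
    have hg := (hdiff (x + t • v)).hasGradientAt
    have := hg.hasFDerivAt.comp_hasDerivAt t (hcurve t)
    simpa [InnerProductSpace.toDual_apply_apply, Function.comp_def] using this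
  have hψd : ∀ t : ℝ, HasDerivAt ψ
      ((inner ℝ (gradient F (x + t • v)) v : ℝ) - inner ℝ (gradient F x) v
        - L / 2 * ‖v‖ ^ 2 * (2 * t)) t := by
    intro t
    have h1 : HasDerivAt (fun s : ℝ => s * inner ℝ (gradient F x) v)
        (inner ℝ (gradient F x) v) t := by
      simpa using (hasDerivAt_id t).mul_const (inner ℝ (gradient F x) v : ℝ)
    have h2 : HasDerivAt (fun s : ℝ => L / 2 * ‖v‖ ^ 2 * s ^ 2)
        (L / 2 * ‖v‖ ^ 2 * (2 * t)) t := by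
      simpa [mul_comm] using (hasDerivAt_pow 2 t).const_mul (L / 2 * ‖v‖ ^ 2)
    exact ((hFt t).sub h1).sub h2
  have hanti : AntitoneOn ψ (Set.Icc 0 1) := by
    apply antitoneOn_of_deriv_nonpos (convex_Icc 0 1)
    · refine Continuous.continuousOn ?_
      have hc1 : Continuous (fun s : ℝ => x + s • v) :=
        continuous_const.add (continuous_id.smul continuous_const)
      exact ((hdiff.continuous.comp hc1).sub
        (continuous_id.mul continuous_const)).sub
        (continuous_const.mul (continuous_pow 2))
    · intro t ht
      exact ((hψd t).differentiableAt).differentiableWithinAt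
    · intro t ht
      rw [interior_Icc] at ht
      rw [(hψd t).deriv]
      have hibnd : (inner ℝ (gradient F (x + t • v)) v : ℝ) - inner ℝ (gradient F x) v
          ≤ L * t * ‖v‖ ^ 2 := by
        have h1 : (inner ℝ (gradient F (x + t • v)) v : ℝ) - inner ℝ (gradient F x) v
            = inner ℝ (gradient F (x + t • v) - gradient F x) v := by
          rw [inner_sub_left]
        rw [h1]
        calc (inner ℝ (gradient F (x + t • v) - gradient F x) v : ℝ)
            ≤ ‖gradient F (x + t • v) - gradient F x‖ * ‖v‖ := real_inner_le_norm _ _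
          _ ≤ L * ‖(x + t • v) - x‖ * ‖v‖ := by
              gcongr; exact hlip _ _
          _ = L * t * ‖v‖ ^ 2 := by
              rw [add_sub_cancel_left, norm_smul, Real.norm_eq_abs,
                abs_of_pos ht.1]
              ring
      nlinarith [ht.1.le]
  have h01 := hanti (Set.left_mem_Icc.2 zero_le_one) (Set.right_mem_Icc.2 zero_le_one)
    zero_le_one
  have e1 : x + (1 : ℝ) • v = y := by rw [one_smul, hv]; abel
  have e0 : x + (0 : ℝ) • v = x := by rw [zero_smul, add_zero]
  simp only [hψ, e1, e0, one_mul, one_pow, zero_mul, mul_zero, sub_zero,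
    mul_one, zero_pow] at h01
  nlinarith [h01]

lemma lupa_jensen {E : Type*} [NormedAddCommGroup E] {p : ℕ}
    (v : Fin p → E) : ‖∑ j, v j‖ ^ 2 ≤ p * ∑ j, ‖v j‖ ^ 2 := by
  calc ‖∑ j, v j‖ ^ 2 ≤ (∑ j, ‖v j‖) ^ 2 := by
        have := norm_sum_le Finset.univ v
        nlinarith [norm_nonneg (∑ j, v j), Finset.sum_nonneg (fun j (_ : j ∈ Finset.univ) => norm_nonneg (v j))]
    _ ≤ (Finset.univ : Finset (Fin p)).card * ∑ j, ‖v j‖ ^ 2 :=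
        sq_sum_le_card_mul_sum_sq
    _ = p * ∑ j, ‖v j‖ ^ 2 := by simp

lemma lupa_norm_sq_integral {d : ℕ} {Ω : Type*} [MeasureSpace Ω]
    [IsProbabilityMeasure (ℙ : Measure Ω)]
    (W : Ω → EuclideanSpace ℝ (Fin d)) (hW : MemLp W 2 ℙ) :
    ∫ ω, ‖W ω‖ ^ 2 = ∑ k, ∫ ω, (W ω k) ^ 2 := by
  have hco : ∀ k, MemLp (fun ω => W ω k) 2 ℙ := fun k =>
    (EuclideanSpace.proj k : EuclideanSpace ℝ (Fin d) →L[ℝ] ℝ).comp_memLp' hW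
  have h1 : ∀ ω, ‖W ω‖ ^ 2 = ∑ k, (W ω k) ^ 2 := by
    intro ω
    rw [EuclideanSpace.norm_eq, Real.sq_sqrt (Finset.sum_nonneg fun k _ => sq_nonneg _)]
    simp [sq_abs]
  simp_rw [h1]
  exact integral_finset_sum _ (fun k _ => (hco k).integrable_sq)
lemma lupa_var_sum {d p : ℕ} {Ω : Type*} [MeasureSpace Ω]
    [IsProbabilityMeasure (ℙ : Measure Ω)]
    (Z : Fin p → Ω → EuclideanSpace ℝ (Fin d))
    (hindep : iIndepFun Z ℙ)
    (hL2 : ∀ j, MemLp (Z j) 2 ℙ)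
    (hmean : ∀ j, (∫ ω, Z j ω) = 0) :
    ∫ ω, ‖∑ j, Z j ω‖ ^ 2 = ∑ j, ∫ ω, ‖Z j ω‖ ^ 2 := by
  -- coordinate variables
  set W : Fin p → Fin d → Ω → ℝ := fun j k ω => Z j ω k with hWdef
  have hWmem : ∀ j k, MemLp (W j k) 2 ℙ := fun j k =>
    (EuclideanSpace.proj k : EuclideanSpace ℝ (Fin d) →L[ℝ] ℝ).comp_memLp' (hL2 j)
  have hWint : ∀ j k, Integrable (W j k) ℙ := fun j k => (hWmem j k).integrable one_le_two
  have hWmean : ∀ j k, (∫ ω, W j k ω) = 0 := by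
    intro j k
    have := (EuclideanSpace.proj k : EuclideanSpace ℝ (Fin d) →L[ℝ] ℝ).integral_comp_comm
      ((hL2 j).integrable one_le_two)
    simpa [hmean j] using this
  -- mean-zero L² real rv: ∫ X² = variance
  have hsqvar : ∀ (X : Ω → ℝ), MemLp X 2 ℙ → (∫ ω, X ω) = 0 →
      (∫ ω, X ω ^ 2) = variance X ℙ := by
    intro X hX hX0
    rw [variance_eq_sub hX]
    simp [Pi.pow_apply, hX0]
  -- independence of k-th coordinates across j
  have hWindep : ∀ k, ∀ i j : Fin p, i ≠ j → IndepFun (W i k) (W j k) ℙ := by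
    intro k i j hij
    have : iIndepFun (fun j => (fun v : EuclideanSpace ℝ (Fin d) => v k) ∘ Z j) ℙ :=
      hindep.comp (fun _ v => v k)
        (fun _ => (EuclideanSpace.proj k : EuclideanSpace ℝ (Fin d) →L[ℝ] ℝ).measurable)
    exact this.indepFun hij
  have hsum_apply : ∀ (ω : Ω) (k : Fin d), (∑ j, Z j ω) k = ∑ j, W j k ω := by
    intro ω k
    have := map_sum (EuclideanSpace.proj k : EuclideanSpace ℝ (Fin d) →L[ℝ] ℝ)
      (fun j => Z j ω) Finset.univ
    exact this
  calc ∫ ω, ‖∑ j, Z j ω‖ ^ 2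
      = ∑ k, ∫ ω, ((∑ j, Z j ω) k) ^ 2 :=
        lupa_norm_sq_integral _ (memLp_finset_sum _ (fun j _ => hL2 j))
    _ = ∑ k, ∑ j, ∫ ω, W j k ω ^ 2 := by
        refine Finset.sum_congr rfl fun k _ => ?_
        have hSmem : MemLp (fun ω => ∑ j, W j k ω) 2 ℙ :=
          memLp_finset_sum _ (fun j _ => hWmem j k)
        have hSmean : (∫ ω, ∑ j, W j k ω) = 0 := by
          rw [integral_finset_sum _ (fun j _ => hWint j k)]
          simp [hWmean]
        have e1 : (∫ ω, ((∑ j, Z j ω) k) ^ 2) = ∫ ω, (∑ j, W j k ω) ^ 2 := by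
          simp_rw [hsum_apply]
        rw [e1, hsqvar _ hSmem hSmean]
        have e2 : (fun ω => ∑ j, W j k ω) = ∑ j, W j k := by
          funext ω; simp [Finset.sum_apply]
        rw [e2, IndepFun.variance_sum (fun j _ => hWmem j k)
          (fun i _ j _ hij => hWindep k i j hij)]
        refine Finset.sum_congr rfl fun j _ => ?_
        rw [← hsqvar _ (hWmem j k) (hWmean j k)]
    _ = ∑ j, ∑ k, ∫ ω, W j k ω ^ 2 := Finset.sum_comm
    _ = ∑ j, ∫ ω, ‖Z j ω‖ ^ 2 := by
        refine Finset.sum_congr rfl fun j _ => ?_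
        rw [lupa_norm_sq_integral _ (hL2 j)]

set_option maxHeartbeats 1000000 in
/-- Per-iteration expected descent inequality for one step of local
SGD with model averaging: each worker `j` holds a local model `x j` and an unbiased
stochastic gradient `Y j` with relative-plus-additive variance bound, and the averaged
model `x̄` is updated by one stochastic gradient step. -/
theorem lupa_one_step_descent
    (d p : ℕ) (hd : 0 < d) (hp : 0 < p)
    (L μ C σ B η : ℝ) (hμ : 0 < μ) (hLμ : μ ≤ L) (hC : 0 ≤ C) (hσ : 0 ≤ σ)
    (hB : 0 < B) (hη : 0 ≤ η)
    (F : EuclideanSpace ℝ (Fin d) → ℝ) (Fstar : ℝ)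
    (hdiff : Differentiable ℝ F)
    (hlip : ∀ x y : EuclideanSpace ℝ (Fin d),
      ‖gradient F x - gradient F y‖ ≤ L * ‖x - y‖)
    (hlb : ∀ x : EuclideanSpace ℝ (Fin d), Fstar ≤ F x)
    (hPL : ∀ x : EuclideanSpace ℝ (Fin d),
      μ * (F x - Fstar) ≤ (1 / 2) * ‖gradient F x‖ ^ 2)
    (x : Fin p → EuclideanSpace ℝ (Fin d))
    (xbar : EuclideanSpace ℝ (Fin d)) (hxbar : xbar = (p : ℝ)⁻¹ • ∑ j, x j)
    (Ω : Type*) [MeasureSpace Ω] [IsProbabilityMeasure (ℙ : Measure Ω)]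
    (Y : Fin p → Ω → EuclideanSpace ℝ (Fin d))
    (hindep : iIndepFun Y ℙ)
    (hL2 : ∀ j, MemLp (Y j) 2 ℙ)
    (hmean : ∀ j, (∫ ω, Y j ω) = gradient F (x j))
    (hvar : ∀ j, (∫ ω, ‖Y j ω - gradient F (x j)‖ ^ 2)
      ≤ C * ‖gradient F (x j)‖ ^ 2 + σ ^ 2 / B) :
    (∫ ω, F (xbar - η • ((p : ℝ)⁻¹ • ∑ j, Y j ω))) - Fstar
      ≤ (1 - μ * η) * (F xbar - Fstar)
        + L * η ^ 2 * σ ^ 2 / (2 * p * B)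
        + (η / (2 * p)) * (L * η * (C / p + 1) - 1) * ∑ j, ‖gradient F (x j)‖ ^ 2
        + (η * L ^ 2 / (2 * p)) * ∑ j, ‖xbar - x j‖ ^ 2 := by
  have hp' : (0 : ℝ) < p := by exact_mod_cast hp
  have hL : (0 : ℝ) < L := lt_of_lt_of_le hμ hLμ
  set g : Fin p → EuclideanSpace ℝ (Fin d) := fun j => gradient F (x j) with hg
  set Ybar : Ω → EuclideanSpace ℝ (Fin d) := fun ω => (p : ℝ)⁻¹ • ∑ j, Y j ω with hYb
  set gbar : EuclideanSpace ℝ (Fin d) := (p : ℝ)⁻¹ • ∑ j, g j with hgb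
  -- integrability setup
  have hYint : ∀ j, Integrable (Y j) ℙ := fun j => (hL2 j).integrable one_le_two
  have hYbarmem : MemLp Ybar 2 ℙ :=
    (memLp_finset_sum Finset.univ (fun j _ => hL2 j)).const_smul ((p : ℝ)⁻¹)
  have hYbarint : Integrable Ybar ℙ := hYbarmem.integrable one_le_two
  have hYbarmean : (∫ ω, Ybar ω) = gbar := by
    simp only [hYb]
    rw [integral_smul, integral_finset_sum _ (fun j _ => hYint j)]
    simp only [hmean, hgb, hg]
  have hinner : Integrable (fun ω => (inner ℝ (gradient F xbar) (Ybar ω) : ℝ)) ℙ :=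
    hYbarint.const_inner _
  have hnormsq : Integrable (fun ω => ‖Ybar ω‖ ^ 2) ℙ :=
    (memLp_two_iff_integrable_sq_norm hYbarmem.aestronglyMeasurable).1 hYbarmem
  -- pointwise descent bound
  set RHSf : Ω → ℝ := fun ω =>
    F xbar - η * inner ℝ (gradient F xbar) (Ybar ω) + L / 2 * η ^ 2 * ‖Ybar ω‖ ^ 2 with hRHSf
  have hpt : ∀ ω, F (xbar - η • Ybar ω) ≤ RHSf ω := by
    intro ω
    have hdl := lupa_descent hL.le F hdiff hlip xbar (xbar - η • Ybar ω)
    have e : xbar - η • Ybar ω - xbar = -(η • Ybar ω) := by abel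
    rw [e, inner_neg_right, real_inner_smul_right, norm_neg, norm_smul,
      Real.norm_eq_abs, abs_of_nonneg hη, mul_pow] at hdl
    simp only [hRHSf]
    nlinarith [hdl]
  have hint1 : Integrable (fun ω => F xbar - η * inner ℝ (gradient F xbar) (Ybar ω)) ℙ :=
    (integrable_const (F xbar)).sub (hinner.const_mul η)
  have hint2 : Integrable (fun ω => L / 2 * η ^ 2 * ‖Ybar ω‖ ^ 2) ℙ :=
    hnormsq.const_mul (L / 2 * η ^ 2)
  have hRHSint : Integrable RHSf ℙ := hint1.add hint2
  -- integrability of F along the trajectory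
  have hzasm : AEStronglyMeasurable (fun ω => xbar - η • Ybar ω) ℙ :=
    aestronglyMeasurable_const.sub (hYbarmem.aestronglyMeasurable.const_smul η)
  have hGasm : AEStronglyMeasurable (fun ω => F (xbar - η • Ybar ω)) ℙ :=
    hdiff.continuous.comp_aestronglyMeasurable hzasm
  have hGint : Integrable (fun ω => F (xbar - η • Ybar ω)) ℙ := by
    have hbnd : Integrable (fun ω => |Fstar| + (RHSf ω - Fstar)) ℙ :=
      (integrable_const |Fstar|).add (hRHSint.sub (integrable_const Fstar))
    refine Integrable.mono' hbnd hGasm (Filter.Eventually.of_forall fun ω => ?_)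
    have h1 := hpt ω
    have h2 := hlb (xbar - η • Ybar ω)
    rw [Real.norm_eq_abs, abs_le]
    constructor
    · have := neg_abs_le Fstar
      linarith
    · have := le_abs_self Fstar
      linarith
  -- expectation bound
  have hEbound : (∫ ω, F (xbar - η • Ybar ω))
      ≤ F xbar - η * inner ℝ (gradient F xbar) gbar
        + L / 2 * η ^ 2 * ∫ ω, ‖Ybar ω‖ ^ 2 := by
    have h1 : (∫ ω, F (xbar - η • Ybar ω)) ≤ ∫ ω, RHSf ω :=
      integral_mono hGint hRHSint hpt
    have h2 : (∫ ω, RHSf ω)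
        = F xbar - η * inner ℝ (gradient F xbar) gbar
          + L / 2 * η ^ 2 * ∫ ω, ‖Ybar ω‖ ^ 2 := by
      simp only [hRHSf]
      rw [integral_add hint1 hint2,
        integral_sub (integrable_const (F xbar)) (hinner.const_mul η),
        integral_const, integral_const_mul, integral_const_mul,
        integral_inner hYbarint, hYbarmean]
      simp
    rw [← h2]; exact h1
  -- second moment decomposition
  set V : ℝ := ∫ ω, ‖Ybar ω - gbar‖ ^ 2 with hV
  have hVint : Integrable (fun ω => ‖Ybar ω - gbar‖ ^ 2) ℙ :=
    (memLp_two_iff_integrable_sq_norm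
      (hYbarmem.aestronglyMeasurable.sub aestronglyMeasurable_const)).1
      (hYbarmem.sub (memLp_const _))
  have hcross : Integrable (fun ω => (inner ℝ gbar (Ybar ω - gbar) : ℝ)) ℙ :=
    (hYbarint.sub (integrable_const _)).const_inner _
  have hE2 : (∫ ω, ‖Ybar ω‖ ^ 2) = V + ‖gbar‖ ^ 2 := by
    have e : ∀ ω, ‖Ybar ω‖ ^ 2
        = ‖Ybar ω - gbar‖ ^ 2 + 2 * inner ℝ gbar (Ybar ω - gbar) + ‖gbar‖ ^ 2 := by
      intro ω
      have := norm_add_sq_real (Ybar ω - gbar) gbar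
      rw [sub_add_cancel] at this
      rw [this, real_inner_comm]
    have hc2 : Integrable (fun ω => 2 * (inner ℝ gbar (Ybar ω - gbar) : ℝ)) ℙ :=
      hcross.const_mul 2
    have hs1 : Integrable (fun ω => ‖Ybar ω - gbar‖ ^ 2
        + 2 * (inner ℝ gbar (Ybar ω - gbar) : ℝ)) ℙ := hVint.add hc2
    have hsubint : Integrable (fun ω => Ybar ω - gbar) ℙ :=
      hYbarint.sub (integrable_const _)
    simp_rw [e]
    rw [integral_add hs1 (integrable_const _),
      integral_add hVint hc2, integral_const, integral_const_mul,
      integral_inner hsubint,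
      integral_sub hYbarint (integrable_const _), integral_const, hYbarmean]
    simp [hV]
  -- variance bound
  set Z : Fin p → Ω → EuclideanSpace ℝ (Fin d) := fun j ω => Y j ω - g j with hZ
  have hZindep : iIndepFun Z ℙ := by
    exact hindep.comp (fun j v => v - g j) (fun j => measurable_id.sub measurable_const)
  have hZmem : ∀ j, MemLp (Z j) 2 ℙ := fun j => (hL2 j).sub (memLp_const _)
  have hZmean : ∀ j, (∫ ω, Z j ω) = 0 := by
    intro j
    simp only [hZ]
    rw [integral_sub (hYint j) (integrable_const _), integral_const, hmean]
    simp [hg]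
  have hVbound : V ≤ ((p : ℝ)⁻¹) ^ 2 * (C * (∑ j, ‖g j‖ ^ 2) + p * (σ ^ 2 / B)) := by
    have e : ∀ ω, ‖Ybar ω - gbar‖ ^ 2 = ((p : ℝ)⁻¹) ^ 2 * ‖∑ j, Z j ω‖ ^ 2 := by
      intro ω
      have e1 : Ybar ω - gbar = (p : ℝ)⁻¹ • (∑ j, Z j ω) := by
        simp only [hYb, hgb, hZ, ← smul_sub, Finset.sum_sub_distrib]
      rw [e1, norm_smul, Real.norm_eq_abs, abs_of_nonneg (by positivity), mul_pow]
    have e2 : V = ((p : ℝ)⁻¹) ^ 2 * ∫ ω, ‖∑ j, Z j ω‖ ^ 2 := by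
      rw [hV]
      simp_rw [e]
      rw [integral_const_mul]
    rw [e2, lupa_var_sum Z hZindep hZmem hZmean]
    have e3 : (∑ j, ∫ ω, ‖Z j ω‖ ^ 2) ≤ C * (∑ j, ‖g j‖ ^ 2) + p * (σ ^ 2 / B) := by
      calc (∑ j, ∫ ω, ‖Z j ω‖ ^ 2)
          ≤ ∑ j, (C * ‖g j‖ ^ 2 + σ ^ 2 / B) :=
            Finset.sum_le_sum (fun j _ => hvar j)
        _ = C * (∑ j, ‖g j‖ ^ 2) + p * (σ ^ 2 / B) := by
            rw [Finset.sum_add_distrib, Finset.sum_const, ← Finset.mul_sum]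
            simp [mul_comm]
      
    have hps : (0:ℝ) ≤ ((p : ℝ)⁻¹) ^ 2 := by positivity
    exact mul_le_mul_of_nonneg_left e3 hps
  -- inner ℝ product expansion
  set A : ℝ := ∑ j, ‖g j‖ ^ 2 with hA
  set D : ℝ := ∑ j, ‖xbar - x j‖ ^ 2 with hD
  set D2 : ℝ := ∑ j, ‖gradient F xbar - g j‖ ^ 2 with hD2
  set S : ℝ := ∑ j, (inner ℝ (gradient F xbar) (g j) : ℝ) with hS
  set G0 : ℝ := ‖gradient F xbar‖ ^ 2 with hG0
  have hinner_gbar : (inner ℝ (gradient F xbar) gbar : ℝ) = (p : ℝ)⁻¹ * S := by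
    rw [hgb, real_inner_smul_right, hS, inner_sum]
  have hSrel : 2 * S = p * G0 + A - D2 := by
    have e : ∀ j : Fin p, 2 * (inner ℝ (gradient F xbar) (g j) : ℝ)
        = G0 + ‖g j‖ ^ 2 - ‖gradient F xbar - g j‖ ^ 2 := by
      intro j
      have := norm_sub_sq_real (gradient F xbar) (g j)
      rw [hG0]; linarith
    calc 2 * S = ∑ j, 2 * (inner ℝ (gradient F xbar) (g j) : ℝ) := by
          rw [hS, Finset.mul_sum]
      _ = ∑ j, (G0 + ‖g j‖ ^ 2 - ‖gradient F xbar - g j‖ ^ 2) :=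
          Finset.sum_congr rfl (fun j _ => e j)
      _ = (p : ℝ) * G0 + A - D2 := by
          rw [Finset.sum_sub_distrib, Finset.sum_add_distrib, Finset.sum_const]
          simp only [Finset.card_univ, Fintype.card_fin, nsmul_eq_mul, hA, hD2]
  have hD2bound : D2 ≤ L ^ 2 * D := by
    rw [hD2, hD, Finset.mul_sum]
    refine Finset.sum_le_sum fun j _ => ?_
    have h1 := hlip xbar (x j)
    have h2 : (0:ℝ) ≤ L * ‖xbar - x j‖ := by positivity
    nlinarith [norm_nonneg (gradient F xbar - g j)]
  have hNbound : ‖gbar‖ ^ 2 ≤ A / p := by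
    rw [hgb, norm_smul, Real.norm_eq_abs, abs_of_nonneg (by positivity), mul_pow]
    have := lupa_jensen g
    rw [← hA] at this
    rw [div_eq_inv_mul]
    calc ((p:ℝ)⁻¹) ^ 2 * ‖∑ j, g j‖ ^ 2 ≤ ((p:ℝ)⁻¹) ^ 2 * ((p:ℝ) * A) := by
          refine mul_le_mul_of_nonneg_left this (by positivity)
      _ = (p:ℝ)⁻¹ * A := by field_simp
  have hPLx : μ * η * (F xbar - Fstar) ≤ η * (G0 / 2) := by
    have := hPL xbar
    rw [← hG0] at this
    nlinarith [mul_le_mul_of_nonneg_left this hη]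
  have hA0 : 0 ≤ A := Finset.sum_nonneg fun j _ => sq_nonneg _
  have hD0 : 0 ≤ D := Finset.sum_nonneg fun j _ => sq_nonneg _
  have hV0 : 0 ≤ V := integral_nonneg fun ω => sq_nonneg _
  have hG00 : 0 ≤ G0 := sq_nonneg _
  -- assemble
  have hfinal : (∫ ω, F (xbar - η • Ybar ω))
      ≤ F xbar - η * ((p : ℝ)⁻¹ * S)
        + L / 2 * η ^ 2 * (V + ‖gbar‖ ^ 2) := by
    rw [← hE2, ← hinner_gbar]; exact hEbound
  -- scaled inequalities
  have t1 : L / 2 * η ^ 2 * ‖gbar‖ ^ 2 ≤ L / 2 * η ^ 2 * (A / p) :=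
    mul_le_mul_of_nonneg_left hNbound (by positivity)
  have t2 : L / 2 * η ^ 2 * V
      ≤ L / 2 * η ^ 2 * (((p : ℝ)⁻¹) ^ 2 * (C * A + p * (σ ^ 2 / B))) := by
    refine mul_le_mul_of_nonneg_left ?_ (by positivity)
    rw [hA] at hVbound ⊢
    exact hVbound
  have hSval : η * ((p : ℝ)⁻¹ * S)
      = η / 2 * G0 + η / (2 * p) * A - η / (2 * p) * D2 := by
    have hpne : (p : ℝ) ≠ 0 := ne_of_gt hp'
    have hSv : S = ((p : ℝ) * G0 + A - D2) / 2 := by linarith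
    rw [hSv]
    field_simp
  have t3 : η / (2 * p) * (L ^ 2 * D) ≥ η / (2 * p) * D2 :=
    mul_le_mul_of_nonneg_left hD2bound (by positivity)
  -- final algebra
  have hexp1 : L / 2 * η ^ 2 * (((p : ℝ)⁻¹) ^ 2 * (C * A + p * (σ ^ 2 / B)))
      = L * η ^ 2 * C / (2 * p ^ 2) * A + L * η ^ 2 * σ ^ 2 / (2 * p * B) := by
    have hpne : (p : ℝ) ≠ 0 := ne_of_gt hp'
    have hBne : B ≠ 0 := ne_of_gt hB
    field_simp
  have hexp2 : (η / (2 * p)) * (L * η * (C / p + 1) - 1) * A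
      = L * η ^ 2 * C / (2 * p ^ 2) * A + L / 2 * η ^ 2 * (A / p) - η / (2 * p) * A := by
    have hpne : (p : ℝ) ≠ 0 := ne_of_gt hp'
    field_simp
  have hexp3 : (η * L ^ 2 / (2 * p)) * D = η / (2 * p) * (L ^ 2 * D) := by ring
  have hexp4 : (1 - μ * η) * (F xbar - Fstar) = (F xbar - Fstar) - μ * η * (F xbar - Fstar) := by
    ring
  have hgoalLHS : (∫ ω, F (xbar - η • ((p : ℝ)⁻¹ • ∑ j, Y j ω))) = ∫ ω, F (xbar - η • Ybar ω) :=
    rfl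
  rw [hgoalLHS, hexp2, hexp3, hexp4]
  linarith [hfinal, t1, t2, t3, hPLx, hSval, hexp1]
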